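/- If G is a banana tree and {a_1, ..., a_n} is the multiset of sizes of its edge bunches, then gon(G) ≤ lcm(a_1, ..., a_n). -/

import Mathlib

open Finset

attribute [local instance] Classical.propDecidable

noncomputable section

/-- A finite loopless multigraph on vertex type `V`, given by a symmetric
edge-multiplicity function: `mul u v` is the number of edges joining `u` and `v`. -/
structure Multigraph (V : Type) [Fintype V] where
  mul : V → V → ℕ
  symm : ∀ u v, mul u v = mul v u
  loopless : ∀ v, mul v v = 0

namespace Multigraph

variable {V : Type} [Fintype V]

/-- The underlying simple graph of a multigraph. -/
def underlying (G : Multigraph V) : SimpleGraph V where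
  Adj u v := 0 < G.mul u v
  symm := ⟨by
    intro u v (h : 0 < G.mul u v)
    rwa [G.symm] at h⟩
  loopless := ⟨by
    intro v (h : 0 < G.mul v v)
    simp [G.loopless] at h⟩

/-- A multigraph is connected if its underlying simple graph is. -/
def Connected (G : Multigraph V) : Prop := G.underlying.Connected

/-- A banana tree is a multigraph whose underlying simple graph is a tree. -/
def IsBananaTree (G : Multigraph V) : Prop := G.underlying.IsTree

/-- The valence (degree) of a vertex. -/
def valence (G : Multigraph V) (v : V) : ℕ := ∑ w, G.mul v w

/-- The number of edges of a multigraph. -/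
def edgeCount (G : Multigraph V) : ℕ := (∑ u, ∑ v, G.mul u v) / 2

/-- The genus (first Betti number) `|E| - |V| + 1` of a connected multigraph. -/
def genus (G : Multigraph V) : ℕ := G.edgeCount + 1 - Fintype.card V

/-- The degree of a divisor: the total number of chips. -/
def degree (D : V → ℤ) : ℤ := ∑ v, D v

/-- A divisor is effective if it is nonnegative everywhere. -/
def Effective (D : V → ℤ) : Prop := ∀ v, 0 ≤ D v

/-- Linear equivalence of divisors: `D'` is obtained from `D` by a finite sequence of
chip-firing moves, equivalently (for connected graphs) via an integral firing script `σ`. -/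
def LinEquiv (G : Multigraph V) (D D' : V → ℤ) : Prop :=
  ∃ σ : V → ℤ, ∀ v, D' v = D v + ∑ w, (G.mul v w : ℤ) * (σ w - σ v)

/-- A divisor has positive rank if for every vertex `v` it is linearly equivalent to an
effective divisor placing at least one chip on `v`. -/
def PosRank (G : Multigraph V) (D : V → ℤ) : Prop :=
  ∀ v, ∃ D', G.LinEquiv D D' ∧ Effective D' ∧ 1 ≤ D' v

/-- The (divisorial) gonality: the minimum degree of a positive-rank effective divisor. -/
def gonality (G : Multigraph V) : ℕ :=
  sInf {d : ℕ | ∃ D : V → ℤ, Effective D ∧ G.PosRank D ∧ degree D = (d : ℤ)}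

/-- `f(G, v, k)`: the minimum degree of an effective divisor `D` on `G` such that
`D + k·v` has positive rank. -/
def fmin (G : Multigraph V) (v : V) (k : ℕ) : ℕ :=
  sInf {d : ℕ | ∃ D : V → ℤ, Effective D ∧
    G.PosRank (fun u => D u + if u = v then (k : ℤ) else 0) ∧ degree D = (d : ℤ)}

/-- Delete a vertex from a multigraph. -/
def deleteVertex (G : Multigraph V) (v : V) : Multigraph {u : V // u ≠ v} where
  mul a b := G.mul a.1 b.1
  symm := fun a b => G.symm a.1 b.1
  loopless := fun a => G.loopless a.1

/-- Delete one single edge between `u` and `w` (if any) from a multigraph. -/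
def deleteOneEdge (G : Multigraph V) (u w : V) : Multigraph V where
  mul x y := if (x = u ∧ y = w) ∨ (x = w ∧ y = u) then G.mul x y - 1 else G.mul x y
  symm := by
    intro x y
    by_cases h : (x = u ∧ y = w) ∨ (x = w ∧ y = u)
    · have h' : (y = u ∧ x = w) ∨ (y = w ∧ x = u) := by tauto
      simp [h, h', G.symm x y]
    · have h' : ¬((y = u ∧ x = w) ∨ (y = w ∧ x = u)) := by tauto
      simp [h, h', G.symm x y]
  loopless := by
    intro v
    by_cases h : (v = u ∧ v = w) ∨ (v = w ∧ v = u)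
    · simp [h, G.loopless]
    · simp [h, G.loopless]

/-- The adjacency move from `v` to `w` on a banana tree: the subset-firing move at the
connected component of `v` after removing the `v`-`w` edge bunch.  Its net effect is to
move `|E(v,w)|` chips from `v` to `w`. -/
def adjMove (G : Multigraph V) (v w : V) (D : V → ℤ) : V → ℤ :=
  fun u => if u = v then D u - (G.mul v w : ℤ)
    else if u = w then D u + (G.mul v w : ℤ) else D u

/-- A single legal adjacency move: both divisors are effective and the second is
obtained from the first by an adjacency move between adjacent vertices. -/
def LegalAdjStep (G : Multigraph V) (D D' : V → ℤ) : Prop :=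
  ∃ v w, G.underlying.Adj v w ∧ Effective D ∧ Effective D' ∧ D' = G.adjMove v w D

/-- A scramble: a collection of nonempty vertex sets (eggs), each inducing a connected
subgraph. -/
def IsScramble (G : Multigraph V) (S : Finset (Finset V)) : Prop :=
  ∀ X ∈ S, X.Nonempty ∧ (G.underlying.induce (X : Set V)).Connected

/-- A hitting set of a scramble: a set of vertices meeting every egg. -/
def IsHittingSet (S : Finset (Finset V)) (T : Finset V) : Prop :=
  ∀ X ∈ S, (X ∩ T).Nonempty

/-- The hitting number of a scramble. -/
def hittingNumber (S : Finset (Finset V)) : ℕ∞ :=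
  sInf {t : ℕ∞ | ∃ T : Finset V, IsHittingSet S T ∧ (T.card : ℕ∞) = t}

/-- The simple graph remaining after removing `c u w` of the edges of each bunch. -/
def cutGraph (G : Multigraph V) (c : V → V → ℕ) : SimpleGraph V where
  Adj u w := u ≠ w ∧ c u w < G.mul u w ∧ c w u < G.mul w u
  symm := ⟨fun u w h => ⟨h.1.symm, h.2.2, h.2.1⟩⟩
  loopless := ⟨fun u h => h.1 rfl⟩

/-- `c` describes an egg-cut of the scramble `S`: a set of edges of `G` (given by the
number `c u w` of edges removed from each bunch) whose removal leaves at least two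
connected components each completely containing an egg. -/
def IsEggCut (G : Multigraph V) (S : Finset (Finset V)) (c : V → V → ℕ) : Prop :=
  (∀ u w, c u w = c w u) ∧ (∀ u w, c u w ≤ G.mul u w) ∧
  ∃ X₁ ∈ S, ∃ X₂ ∈ S,
    (∀ x ∈ X₁, ∀ y ∈ X₁, (G.cutGraph c).Reachable x y) ∧
    (∀ x ∈ X₂, ∀ y ∈ X₂, (G.cutGraph c).Reachable x y) ∧
    (∀ x ∈ X₁, ∀ y ∈ X₂, ¬ (G.cutGraph c).Reachable x y)

/-- The egg-cut number of a scramble (`⊤` if no egg-cut exists). -/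
def eggCutNumber (G : Multigraph V) (S : Finset (Finset V)) : ℕ∞ :=
  sInf {t : ℕ∞ | ∃ c : V → V → ℕ, G.IsEggCut S c ∧
    ((∑ u, ∑ w, c u w : ℕ) : ℕ∞) = 2 * t}

/-- The order of a scramble: the minimum of its hitting number and egg-cut number. -/
def scrambleOrder (G : Multigraph V) (S : Finset (Finset V)) : ℕ∞ :=
  min (hittingNumber S) (G.eggCutNumber S)

/-- The scramble number of a multigraph: the maximum order of a scramble on it. -/
def scrambleNumber (G : Multigraph V) : ℕ∞ :=
  sSup {m : ℕ∞ | ∃ S : Finset (Finset V), G.IsScramble S ∧ G.scrambleOrder S = m}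

/-- The weight of a node `t` in a tree-cut decomposition `(T, X)`: the number of vertices
mapped to `t` plus the number of edges routed through `t` with neither endpoint mapped
to `t`. -/
def nodeWeight (G : Multigraph V) {N : Type} [Fintype N] (T : SimpleGraph N)
    (X : V → N) (t : N) : ℕ :=
  (Finset.univ.filter fun v => X v = t).card +
    (∑ u, ∑ w, if X u ≠ t ∧ X w ≠ t ∧
        ¬ (T.deleteEdges {e | t ∈ e}).Reachable (X u) (X w)
      then G.mul u w else 0) / 2

/-- The weight of a link `pq` in a tree-cut decomposition `(T, X)`: the number of edges
of `G` routed through that link. -/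
def linkWeight (G : Multigraph V) {N : Type} (T : SimpleGraph N)
    (X : V → N) (p q : N) : ℕ :=
  (∑ u, ∑ w, if ¬ (T.deleteEdges {s(p, q)}).Reachable (X u) (X w)
    then G.mul u w else 0) / 2

/-- The width of a tree-cut decomposition `(T, X)`: the maximum of all node and link
weights. -/
def tcdWidth (G : Multigraph V) {N : Type} [Fintype N] (T : SimpleGraph N)
    (X : V → N) : ℕ :=
  max (Finset.univ.sup fun t => G.nodeWeight T X t)
      (Finset.univ.sup fun p : N × N =>
        if T.Adj p.1 p.2 then G.linkWeight T X p.1 p.2 else 0)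

/-- The screewidth of a multigraph: the minimum width of a tree-cut decomposition. -/
def screewidth (G : Multigraph V) : ℕ :=
  sInf {w : ℕ | ∃ (m : ℕ) (T : SimpleGraph (Fin m)), T.IsTree ∧
    ∃ X : V → Fin m, G.tcdWidth T X = w}

/-- The banana path on `n+1` vertices `v_0, …, v_n`, with `a i` edges joining
`v_i` and `v_{i+1}` (for `0 ≤ i < n`). -/
def bananaPath (n : ℕ) (a : ℕ → ℕ) : Multigraph (Fin (n + 1)) where
  mul i j := if i.val + 1 = j.val then a i.val else if j.val + 1 = i.val then a j.val else 0
  symm := by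
    intro u v
    try dsimp only
    split_ifs <;> first | rfl | (exfalso; omega)
  loopless := by
    intro v
    have h : ¬ (v.val + 1 = v.val) := by omega
    simp [h]

/-- The banana star with central vertex `Sum.inl ()` and, for each `i : Fin k`,
`r i` leaves joined to the center by `a i` parallel edges. -/
def bananaStar (k : ℕ) (a r : Fin k → ℕ) :
    Multigraph (Unit ⊕ (Σ i : Fin k, Fin (r i))) where
  mul x y :=
    match x, y with
    | Sum.inl _, Sum.inr ⟨i, _⟩ => a i
    | Sum.inr ⟨i, _⟩, Sum.inl _ => a i
    | _, _ => 0
  symm := by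
    intro u v
    rcases u with u | ⟨i, li⟩ <;> rcases v with v | ⟨j, lj⟩ <;> rfl
  loopless := by
    intro v
    rcases v with v | ⟨i, li⟩ <;> rfl

end Multigraph

namespace BananaAux
open Multigraph SimpleGraph
variable {V : Type} [Fintype V]

lemma linEquiv_trans (G : Multigraph V) {D1 D2 D3 : V → ℤ}
    (h1 : G.LinEquiv D1 D2) (h2 : G.LinEquiv D2 D3) : G.LinEquiv D1 D3 := by
  obtain ⟨σ1, h1⟩ := h1
  obtain ⟨σ2, h2⟩ := h2
  refine ⟨σ1 + σ2, fun v => ?_⟩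
  rw [h2 v, h1 v, add_assoc, ← Finset.sum_add_distrib]
  congr 1
  refine Finset.sum_congr rfl fun w _ => ?_
  simp only [Pi.add_apply]
  ring

lemma adj_step (G : Multigraph V) (hG : G.IsBananaTree) {v w : V}
    (h : G.underlying.Adj v w) {L : ℕ} (hdvd : G.mul v w ∣ L) :
    G.LinEquiv (fun u => if u = v then (L : ℤ) else 0)
      (fun u => if u = w then (L : ℤ) else 0) := by
  obtain ⟨c, hc⟩ := hdvd
  set H := G.underlying.deleteEdges {s(v,w)} with hH
  set A : V → Prop := fun u => H.Reachable v u with hA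
  have hAv : A v := Reachable.refl v
  have hvw : v ≠ w := h.ne
  have hAw : ¬ A w := by
    have hb : G.underlying.IsBridge s(v,w) :=
      (isAcyclic_iff_forall_edge_isBridge.mp hG.IsAcyclic)
        ((G.underlying).mem_edgeSet.mpr h)
    exact isBridge_iff.mp hb
  have hcross : ∀ x y : V, 0 < G.mul x y → A x → ¬ A y → x = v ∧ y = w := by
    intro x y hxy hAx hAy
    by_cases he : s(x,y) = s(v,w)
    · rcases Sym2.eq_iff.mp he with ⟨rfl, rfl⟩ | ⟨rfl, rfl⟩
      · exact ⟨rfl, rfl⟩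
      · exact absurd hAv hAy
    · exfalso
      have hadj : H.Adj x y := by
        rw [hH, deleteEdges_adj]
        exact ⟨hxy, by simpa using he⟩
      exact hAy (hAx.trans hadj.reachable)
  refine ⟨fun u => if A u then (c : ℤ) else 0, fun u => ?_⟩
  have hm : 0 < G.mul v w := h
  by_cases hAu : A u
  · have huw : u ≠ w := fun e => hAw (e ▸ hAu)
    simp only [hAu, if_true, huw, if_false]
    by_cases huv : u = v
    · subst huv
      have hS : (∑ x, (G.mul u x : ℤ) * ((if A x then (c:ℤ) else 0) - c)) = -(L:ℤ) := by
        rw [Finset.sum_eq_single w]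
        · simp only [hAw, if_false]
          rw [hc]
          push_cast
          ring
        · intro x _ hxw
          by_cases hAx : A x
          · simp [hAx]
          · have : G.mul u x = 0 := by
              by_contra hne
              exact hxw (hcross u x (Nat.pos_of_ne_zero hne) hAu hAx).2
            simp [this]
        · intro hw; exact absurd (Finset.mem_univ w) hw
      rw [hS]; simp
    · simp only [huv, if_false]
      have hS : (∑ x, (G.mul u x : ℤ) * ((if A x then (c:ℤ) else 0) - c)) = 0 := by
        refine Finset.sum_eq_zero fun x _ => ?_
        by_cases hAx : A x
        · simp [hAx]
        · have : G.mul u x = 0 := by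
            by_contra hne
            exact huv (hcross u x (Nat.pos_of_ne_zero hne) hAu hAx).1
          simp [this]
      rw [hS]; simp
  · have huv : u ≠ v := fun e => hAu (e ▸ hAv)
    simp only [hAu, if_false, huv]
    by_cases huw : u = w
    · subst huw
      have hS : (∑ x, (G.mul u x : ℤ) * ((if A x then (c:ℤ) else 0) - 0)) = (L:ℤ) := by
        rw [Finset.sum_eq_single v]
        · simp only [hAv, if_true]
          rw [G.symm u v, hc]
          push_cast
          ring
        · intro x _ hxv
          by_cases hAx : A x
          · have : G.mul x u = 0 := by
              by_contra hne
              exact hxv (hcross x u (Nat.pos_of_ne_zero hne) hAx hAu).1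
            rw [G.symm u x, this]; simp
          · simp [hAx]
        · intro hv; exact absurd (Finset.mem_univ v) hv
      rw [hS]; simp
    · simp only [huw, if_false]
      have hS : (∑ x, (G.mul u x : ℤ) * ((if A x then (c:ℤ) else 0) - 0)) = 0 := by
        refine Finset.sum_eq_zero fun x _ => ?_
        by_cases hAx : A x
        · have : G.mul x u = 0 := by
            by_contra hne
            exact huw (hcross x u (Nat.pos_of_ne_zero hne) hAx hAu).2
          rw [G.symm u x, this]; simp
        · simp [hAx]
      rw [hS]; simp

end BananaAux

open Multigraph in
/-- The gonality of a banana tree is at most the least common multiple of the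
sizes of its edge bunches. -/
theorem gonality_le_lcm_edge_bunches
    {V : Type} [Fintype V] (G : Multigraph V) (hG : G.IsBananaTree) :
    G.gonality ≤ (Finset.univ.filter fun p : V × V => 0 < G.mul p.1 p.2).lcm
      (fun p => G.mul p.1 p.2) := by
  set L := (Finset.univ.filter fun p : V × V => 0 < G.mul p.1 p.2).lcm
      (fun p => G.mul p.1 p.2) with hLdef
  have hconn : G.underlying.Connected := hG.isConnected
  obtain ⟨v0⟩ := hconn.nonempty
  have hdvd : ∀ {x y : V}, G.underlying.Adj x y → G.mul x y ∣ L := by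
    intro x y hxy
    exact Finset.dvd_lcm (Finset.mem_filter.mpr ⟨Finset.mem_univ (x, y), hxy⟩)
  have hL0 : L ≠ 0 := by
    intro h0
    obtain ⟨p, hp, hp0⟩ := Finset.lcm_eq_zero_iff.mp h0
    have := (Finset.mem_filter.mp hp).2
    omega
  have key : ∀ a b : V, G.underlying.Walk a b →
      G.LinEquiv (fun u => if u = a then (L : ℤ) else 0)
        (fun u => if u = b then (L : ℤ) else 0) := by
    intro a b p
    induction p with
    | nil => exact ⟨0, fun u => by simp⟩
    | cons hadj _ ih => exact BananaAux.linEquiv_trans G (BananaAux.adj_step G hG hadj (hdvd hadj)) ih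
  have hmem : L ∈ {d : ℕ | ∃ D : V → ℤ, Effective D ∧ G.PosRank D ∧ degree D = (d : ℤ)} := by
    refine ⟨fun u => if u = v0 then (L : ℤ) else 0, ?_, ?_, ?_⟩
    · intro u; dsimp only; split_ifs <;> positivity
    · intro v
      obtain ⟨p⟩ := hconn.preconnected v0 v
      refine ⟨fun u => if u = v then (L : ℤ) else 0, key v0 v p, ?_, ?_⟩
      · intro u; dsimp only; split_ifs <;> positivity
      · dsimp only; simp only [if_pos rfl]
        exact_mod_cast Nat.one_le_iff_ne_zero.mpr hL0
    · simp [degree]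
  exact Nat.sInf_le hmem
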